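/- The array (7, 17, 13, 23, 11, 3, 29, 5, 19) is a prime vector of order 9: its entries are distinct primes, and for every i and L with L ≥ 1 and 0 ≤ i ≤ i+2L ≤ 8, the sum of entries from index i to i+2L is prime (16 sums in total). -/

import Mathlib

def IsPrimeVector (n : ℕ) (P : ℕ → ℕ) : Prop :=
  (∀ i < n, (P i).Prime) ∧
  (∀ i < n, ∀ j < n, i ≠ j → P i ≠ P j) ∧
  (∀ i L : ℕ, i + 2 * L < n → (∑ k ∈ Finset.range (2 * L + 1), P (i + k)).Prime)

/-- `(7, 17, 13, 23, 11, 3, 29, 5, 19)` is a prime vector of order 9. -/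
theorem stmt19 :
    IsPrimeVector 9 (fun i => [7, 17, 13, 23, 11, 3, 29, 5, 19].getD i 0) := by
  refine ⟨by decide, by decide, ?_⟩
  intro i L h
  have hi : i < 9 := by omega
  have hL : L < 5 := by omega
  interval_cases i <;> interval_cases L <;> simp_all <;> decide
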